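/- For all positive integers ℓ and m, f_{ℓ,m}(1) = Σ_{α=0}^{m} C(m, α) Σ_{β=0}^{ℓ−1} C(ℓ+α−1, β) C(ℓ+m−α−1, β); that is, Σ_{k=0}^{ℓ+m−1} Σ_{α=0}^{k} C(ℓ−1, k−α) C(m, α) Σ_{β=α}^{k} C(ℓ+α−1, β) C(m−α, k−β) = Σ_{α=0}^{m} C(m, α) Σ_{β=0}^{ℓ−1} C(ℓ+α−1, β) C(ℓ+m−α−1, β). -/

import Mathlib

open SimpleGraph Polynomial

namespace PQPaper

instance instFintypeLex {α : Type*} [h : Fintype α] : Fintype (Lex α) := h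

/-- The bipartite graph `D(G)` on `V ⊕ V`: edges `{i, ī}` for every vertex `i`,
and `{i, j̄}`, `{ī, j}` for every edge `{i, j}` of `G`. -/
def DG {V : Type*} (G : SimpleGraph V) : SimpleGraph (V ⊕ V) :=
  SimpleGraph.fromRel fun a b =>
    match a, b with
    | Sum.inl i, Sum.inr j => i = j ∨ G.Adj i j
    | _, _ => False

/-- `f : V → ℕ` is a hypertree of the bipartite graph `H` on `V ⊕ W`
(with hyperedge side `V`): `H` has a spanning tree whose degree at each
left vertex `v` is `f v + 1`. -/
def IsHypertree {V W : Type*} (H : SimpleGraph (V ⊕ W)) (f : V → ℕ) : Prop :=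
  ∃ T : SimpleGraph (V ⊕ W), T ≤ H ∧ T.IsTree ∧
    ∀ v : V, (T.neighborSet (Sum.inl v)).ncard = f v + 1

/-- The set of hypertrees of `H`. -/
def HT {V W : Type*} (H : SimpleGraph (V ⊕ W)) : Set (V → ℕ) :=
  {f | IsHypertree H f}

/-- The set of internally inactive hyperedges of a hypertree `f`. -/
def inactive {V W : Type*} [LT V] (H : SimpleGraph (V ⊕ W)) (f : V → ℕ) : Set V :=
  {j | ∃ j', j' < j ∧ ∃ g : V → ℕ,
    g j' = f j' + 1 ∧ (g j : ℤ) = (f j : ℤ) - 1 ∧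
    (∀ i, i ≠ j' → i ≠ j → g i = f i) ∧ IsHypertree H g}

/-- The interior polynomial `I_H(x) = Σ_{f ∈ HT(H)} x^{ῑ(f)}`. -/
noncomputable def interiorPoly {V W : Type*} [Fintype V] [LinearOrder V]
    (H : SimpleGraph (V ⊕ W)) : Polynomial ℤ :=
  ∑ k ∈ Finset.range (Fintype.card V + 1),
    Polynomial.C ({f | f ∈ HT H ∧ (inactive H f).ncard = k}.ncard : ℤ) * Polynomial.X ^ k

/-- The perfectly matchable sets of a graph: vertex sets of matchings of `H`. -/
def PMSets {V : Type*} (H : SimpleGraph V) : Set (Set V) :=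
  {S | ∃ M : H.Subgraph, M.IsMatching ∧ M.verts = S}

/-- The perfectly matchable set polynomial `p(H,x) = Σ_k |PM(H,k)| x^k`. -/
noncomputable def pmsPoly {V : Type*} [Fintype V] (H : SimpleGraph V) : Polynomial ℤ :=
  ∑ k ∈ Finset.range (Fintype.card V + 1),
    Polynomial.C ({S | S ∈ PMSets H ∧ S.ncard = 2 * k}.ncard : ℤ) * Polynomial.X ^ k

/-- Join of two vertex-disjoint graphs. -/
def sumJoin {V W : Type*} (G : SimpleGraph V) (H : SimpleGraph W) : SimpleGraph (V ⊕ W) where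
  Adj a b :=
    match a, b with
    | Sum.inl x, Sum.inl y => G.Adj x y
    | Sum.inr x, Sum.inr y => H.Adj x y
    | Sum.inl _, Sum.inr _ => True
    | Sum.inr _, Sum.inl _ => True
  symm := by
    refine ⟨?_⟩
    rintro (x | x) (y | y) h
    · exact G.adj_symm h
    · exact trivial
    · exact trivial
    · exact H.adj_symm h
  loopless := by
    refine ⟨?_⟩
    rintro (x | x) h
    · exact G.loopless.irrefl x h
    · exact H.loopless.irrefl x h

/-- Join of a family of pairwise vertex-disjoint graphs. -/
def sigmaJoin {ι : Type*} {V : ι → Type*} (G : ∀ i, SimpleGraph (V i)) :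
    SimpleGraph (Σ i, V i) :=
  SimpleGraph.fromRel fun a b =>
    a.1 ≠ b.1 ∨ ∃ (i : ι) (x y : V i), a = ⟨i, x⟩ ∧ b = ⟨i, y⟩ ∧ (G i).Adj x y

/-- A copy of a graph on the lexicographic type synonym of its vertex type. -/
def lexify {α : Type*} (G : SimpleGraph α) : SimpleGraph (Lex α) :=
  G.map toLex.toEmbedding

/-- The polynomial
`f_{ℓ,m}(x) = Σ_{k=0}^{ℓ+m−1} Σ_{α=0}^{k} C(ℓ−1,k−α) C(m,α) Σ_{β=α}^{k} C(ℓ+α−1,β) C(m−α,k−β) x^k`. -/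
noncomputable def fPoly (l m : ℕ) : Polynomial ℤ :=
  ∑ k ∈ Finset.range (l + m),
    Polynomial.C (∑ a ∈ Finset.range (k + 1),
      ((l - 1).choose (k - a) : ℤ) * (m.choose a : ℤ) *
        ∑ b ∈ Finset.Icc a k, ((l + a - 1).choose b : ℤ) * ((m - a).choose (k - b) : ℤ)) *
      Polynomial.X ^ k

/-- The cycle graph on `n` vertices. -/
def cycG (n : ℕ) : SimpleGraph (Fin n) :=
  SimpleGraph.fromRel fun a b =>
    (b : ℕ) = (a : ℕ) + 1 ∨ ((a : ℕ) = n - 1 ∧ (b : ℕ) = 0)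

/-- `Γ(V')`: the set of neighbours in `D(H)` of the left vertices in `V'`,
viewed as a subset of the right copy `[m̄]`. -/
def Gam {m : ℕ} (H : SimpleGraph (Fin m)) (V' : Set (Fin m)) : Set (Fin m) :=
  {j | ∃ i ∈ V', (DG H).Adj (Sum.inl i) (Sum.inr j)}

/-- Condition (ii): `Σ_{i ∈ V'} f(i) ≤ |Γ(V')| − 1` for every nonempty `V' ⊆ [m]`. -/
def cond2 {m : ℕ} (H : SimpleGraph (Fin m)) (f : Fin m → ℕ) : Prop :=
  ∀ V' : Finset (Fin m), V'.Nonempty →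
    (∑ i ∈ V', f i) + 1 ≤ (Gam H (V' : Set (Fin m))).ncard

/-- `F_H`: functions satisfying conditions (i) and (ii) for `D(H)`. -/
def FSet {m : ℕ} (H : SimpleGraph (Fin m)) : Set (Fin m → ℕ) :=
  {f | (∑ i, f i) = m - 1 ∧ cond2 H f}

/-- `η_H(f)`: indices `j` admitting `j' < j` such that the transfer of one unit
from `j` to `j'` again satisfies condition (ii). -/
def eta {m : ℕ} (H : SimpleGraph (Fin m)) (f : Fin m → ℕ) : Set (Fin m) :=
  {j | ∃ j', j' < j ∧ ∃ g : Fin m → ℕ,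
    g j' = f j' + 1 ∧ (g j : ℤ) = (f j : ℤ) - 1 ∧
    (∀ i, i ≠ j' → i ≠ j → g i = f i) ∧ cond2 H g}

/-- `F_H(k) = {f ∈ F_H : |η_H(f)| = k}`. -/
def FSetK {m : ℕ} (H : SimpleGraph (Fin m)) (k : ℕ) : Set (Fin m → ℕ) :=
  {f | f ∈ FSet H ∧ (eta H f).ncard = k}

/-- All edges between `{1,…,m1}` and `{m1+1,…,m}` in `Fin m`. -/
def crossGraph (m m1 : ℕ) : SimpleGraph (Fin m) :=
  SimpleGraph.fromRel fun a b => (a : ℕ) < m1 ∧ m1 ≤ (b : ℕ)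

/-- The complete graph on the first `m1` vertices of `Fin m`. -/
def leftComplete (m m1 : ℕ) : SimpleGraph (Fin m) :=
  SimpleGraph.fromRel fun a b => (a : ℕ) < m1 ∧ (b : ℕ) < m1

/-- The complete graph on the last `m − m1` vertices of `Fin m`. -/
def rightComplete (m m1 : ℕ) : SimpleGraph (Fin m) :=
  SimpleGraph.fromRel fun a b => m1 ≤ (a : ℕ) ∧ m1 ≤ (b : ℕ)

/-- The tilde construction: a bipartite graph `H` on `V ⊕ W` together with two
new vertices `u = inr 0` and `w = inr 1`, where `u` is joined to all of `V` and
`w` is joined to all of `W` and to `u`. -/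
def tilde {V W : Type*} (H : SimpleGraph (V ⊕ W)) : SimpleGraph ((V ⊕ W) ⊕ Fin 2) :=
  SimpleGraph.fromRel fun a b =>
    (∃ x y, a = Sum.inl x ∧ b = Sum.inl y ∧ H.Adj x y) ∨
    (∃ i : V, a = Sum.inl (Sum.inl i) ∧ b = Sum.inr 0) ∨
    (∃ j : W, a = Sum.inl (Sum.inr j) ∧ b = Sum.inr 1) ∨
    (a = Sum.inr 0 ∧ b = Sum.inr 1)


open Finset in
private lemma vand_aux (p q r : ℕ) :
    ∑ j ∈ range (r + 1), p.choose (r - j) * q.choose j = (p + q).choose r := by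
  rw [Nat.add_choose_eq, Finset.Nat.sum_antidiagonal_eq_sum_range_succ_mk,
    ← Finset.sum_range_reflect]
  refine Finset.sum_congr rfl fun j hj => ?_
  simp only [Finset.mem_range] at hj
  have h1 : r + 1 - 1 - j = r - j := by omega
  have h2 : r - (r - j) = j := by omega
  rw [h1, h2]

open Finset in
private lemma inner_j (p q i n : ℕ) (hi : i ≤ p) (hn : p - i < n) :
    ∑ j ∈ Finset.range n, p.choose (i + j) * q.choose j = (p + q).choose (p - i) := by
  rw [← vand_aux p q (p - i),
    ← Finset.sum_subset (Finset.range_subset_range.2 (by omega) :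
      Finset.range (p - i + 1) ⊆ Finset.range n)
      (fun x hx hx' => by
        simp only [Finset.mem_range] at hx hx'
        rw [Nat.choose_eq_zero_of_lt (by omega : p < i + x), zero_mul])]
  refine Finset.sum_congr rfl fun j hj => ?_
  simp only [Finset.mem_range] at hj
  have h : i + j ≤ p := by omega
  rw [← Nat.choose_symm h]
  congr 2
  omega

/-- For all positive integers `ℓ` and `m`,
`f_{ℓ,m}(1) = Σ_{α=0}^{m} C(m,α) Σ_{β=0}^{ℓ−1} C(ℓ+α−1,β) C(ℓ+m−α−1,β)`. -/
theorem fPoly_eval_one (l m : ℕ) (hl : 1 ≤ l) (hm : 1 ≤ m) :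
    ∑ k ∈ Finset.range (l + m), ∑ a ∈ Finset.range (k + 1),
        (l - 1).choose (k - a) * m.choose a *
          ∑ b ∈ Finset.Icc a k, (l + a - 1).choose b * (m - a).choose (k - b) =
      ∑ a ∈ Finset.range (m + 1), m.choose a *
        ∑ b ∈ Finset.range l, (l + a - 1).choose b * (l + m - a - 1).choose b := by
  calc
    ∑ k ∈ Finset.range (l + m), ∑ a ∈ Finset.range (k + 1),
        (l - 1).choose (k - a) * m.choose a *
          ∑ b ∈ Finset.Icc a k, (l + a - 1).choose b * (m - a).choose (k - b)
-- Step 1: swap k and a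
      = ∑ a ∈ Finset.range (l + m), ∑ k ∈ Finset.Ico a (l + m),
          (l - 1).choose (k - a) * m.choose a *
            ∑ b ∈ Finset.Icc a k, (l + a - 1).choose b * (m - a).choose (k - b) := by
        simp only [Finset.range_eq_Ico]
        exact (Finset.sum_Ico_Ico_comm 0 (l + m) fun a k =>
          (l - 1).choose (k - a) * m.choose a *
            ∑ b ∈ Finset.Icc a k, (l + a - 1).choose b * (m - a).choose (k - b)).symm
-- Step 2: substitute k = a + t, b = a + i
    _ = ∑ a ∈ Finset.range (l + m), ∑ t ∈ Finset.range (l + m - a), ∑ i ∈ Finset.range (t + 1),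
          (l - 1).choose t * m.choose a * ((l + a - 1).choose (a + i) * (m - a).choose (t - i)) := by
        refine Finset.sum_congr rfl fun a _ => ?_
        rw [Finset.sum_Ico_eq_sum_range]
        refine Finset.sum_congr rfl fun t _ => ?_
        rw [← Finset.Ico_add_one_right_eq_Icc, Finset.sum_Ico_eq_sum_range, Finset.mul_sum]
        have e0 : a + t + 1 - a = t + 1 := by omega
        have e1 : a + t - a = t := by omega
        rw [e0, e1]
        refine Finset.sum_congr rfl fun i _ => ?_
        have e2 : a + t - (a + i) = t - i := by omega
        rw [e2]
-- Step 3: cut the a-range to m+1 (C(m,a) = 0 beyond)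
    _ = ∑ a ∈ Finset.range (m + 1), ∑ t ∈ Finset.range (l + m - a), ∑ i ∈ Finset.range (t + 1),
          (l - 1).choose t * m.choose a * ((l + a - 1).choose (a + i) * (m - a).choose (t - i)) := by
        refine (Finset.sum_subset (Finset.range_subset_range.2 (by omega)) fun a _ ha => ?_).symm
        simp only [Finset.mem_range, not_lt] at ha
        refine Finset.sum_eq_zero fun t _ => Finset.sum_eq_zero fun i _ => ?_
        rw [Nat.choose_eq_zero_of_lt (by omega : m < a), mul_zero, zero_mul]
-- Step 4: swap t and i
    _ = ∑ a ∈ Finset.range (m + 1), ∑ i ∈ Finset.range (l + m - a), ∑ t ∈ Finset.Ico i (l + m - a),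
          (l - 1).choose t * m.choose a * ((l + a - 1).choose (a + i) * (m - a).choose (t - i)) := by
        refine Finset.sum_congr rfl fun a _ => ?_
        simp only [Finset.range_eq_Ico]
        exact (Finset.sum_Ico_Ico_comm 0 (l + m - a) fun i t =>
          (l - 1).choose t * m.choose a * ((l + a - 1).choose (a + i) * (m - a).choose (t - i))).symm
-- Step 5: substitute t = i + j
    _ = ∑ a ∈ Finset.range (m + 1), ∑ i ∈ Finset.range (l + m - a), ∑ j ∈ Finset.range (l + m - a - i),
          (l - 1).choose (i + j) * m.choose a * ((l + a - 1).choose (a + i) * (m - a).choose j) := by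
        refine Finset.sum_congr rfl fun a _ => Finset.sum_congr rfl fun i _ => ?_
        rw [Finset.sum_Ico_eq_sum_range]
        refine Finset.sum_congr rfl fun j _ => ?_
        have e : i + j - i = j := by omega
        rw [e]
-- Step 6: cut the i-range to l and evaluate the inner j-sum by Vandermonde
    _ = ∑ a ∈ Finset.range (m + 1), ∑ i ∈ Finset.range l,
          m.choose a * ((l + a - 1).choose (a + i) * (l + m - a - 1).choose (l - 1 - i)) := by
        refine Finset.sum_congr rfl fun a ha => ?_
        simp only [Finset.mem_range] at ha
        rw [← Finset.sum_subset (Finset.range_subset_range.2 (by omega) :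
            Finset.range l ⊆ Finset.range (l + m - a))
          (fun i _ hi => by
            simp only [Finset.mem_range, not_lt] at hi
            refine Finset.sum_eq_zero fun j _ => ?_
            rw [Nat.choose_eq_zero_of_lt (by omega : l + a - 1 < a + i), zero_mul, mul_zero])]
        refine Finset.sum_congr rfl fun i hi => ?_
        simp only [Finset.mem_range] at hi
        calc ∑ j ∈ Finset.range (l + m - a - i),
              (l - 1).choose (i + j) * m.choose a * ((l + a - 1).choose (a + i) * (m - a).choose j)
            = m.choose a * (l + a - 1).choose (a + i) *
              ∑ j ∈ Finset.range (l + m - a - i), (l - 1).choose (i + j) * (m - a).choose j := by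
              rw [Finset.mul_sum]; exact Finset.sum_congr rfl fun j _ => by ring
          _ = m.choose a * ((l + a - 1).choose (a + i) * (l + m - a - 1).choose (l - 1 - i)) := by
              rw [inner_j (l - 1) (m - a) i _ (by omega) (by omega)]
              have e : l - 1 + (m - a) = l + m - a - 1 := by omega
              rw [e, mul_assoc]
-- Step 7: match with RHS via reflection and symmetry of binomial coefficients
    _ = ∑ a ∈ Finset.range (m + 1), m.choose a *
          ∑ b ∈ Finset.range l, (l + a - 1).choose b * (l + m - a - 1).choose b := by
        refine Finset.sum_congr rfl fun a _ => ?_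
        rw [← Finset.mul_sum]
        congr 1
        rw [← Finset.sum_range_reflect (fun b => (l + a - 1).choose b * (l + m - a - 1).choose b) l]
        refine Finset.sum_congr rfl fun i hi => ?_
        simp only [Finset.mem_range] at hi
        congr 1
        rw [show a + i = l + a - 1 - (l - 1 - i) by omega, Nat.choose_symm (by omega)]

end PQPaper
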